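/- Let d ≥ 2 be an integer and p ∈ (0,1), and let X be a d-dimensional exchangeable Bernoulli vector with marginal parameter p. Let ρ = (E[X_i X_j] − p²)/(p(1−p)) for i ≠ j be the common pairwise correlation. If pd is not an integer, then, with j1 = ⌊pd⌋, ((1/(d(d−1)))·[−j1(j1+1) + 2·j1·pd] − p²)/(p(1−p)) ≤ ρ ≤ 1. If pd is an integer, then −1/(d−1) ≤ ρ ≤ 1. -/

import Mathlib

open Finset

/-- For `d ≥ 2`, `p ∈ (0,1)` and an exchangeable Bernoulli vector with marginal
`p`, the common pairwise correlation `ρ = (E[X_i X_j] − p²)/(p(1−p))` satisfies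
`((1/(d(d−1)))(−j₁(j₁+1) + 2 j₁ pd) − p²)/(p(1−p)) ≤ ρ ≤ 1` when `pd` is not an integer
(with `j₁ = ⌊pd⌋`), and `−1/(d−1) ≤ ρ ≤ 1` when `pd` is an integer. -/
theorem stmt_9 (d : ℕ) (hd : 2 ≤ d) (p : ℝ) (hp : p ∈ Set.Ioo (0 : ℝ) 1)
    (f : (Fin d → Bool) → ℝ) (hf0 : ∀ x, 0 ≤ f x) (hf1 : ∑ x, f x = 1)
    (hexch : ∀ σ : Equiv.Perm (Fin d), ∀ x, f (x ∘ σ) = f x)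
    (hmarg : ∀ i : Fin d,
      ∑ x ∈ Finset.univ.filter (fun x : Fin d → Bool => x i = true), f x = p)
    (i j : Fin d) (hij : i ≠ j)
    (ρ : ℝ)
    (hρ : ρ = ((∑ x ∈ Finset.univ.filter
        (fun x : Fin d → Bool => x i = true ∧ x j = true), f x) - p ^ 2) / (p * (1 - p))) :
    ((¬ ∃ k : ℕ, (k : ℝ) = p * d) →
      ((1 / ((d : ℝ) * ((d : ℝ) - 1))) *
          (-(Nat.floor (p * d) : ℝ) * ((Nat.floor (p * d) : ℝ) + 1) +
            2 * (Nat.floor (p * d) : ℝ) * (p * d)) - p ^ 2) / (p * (1 - p)) ≤ ρ ∧ ρ ≤ 1) ∧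
    ((∃ k : ℕ, (k : ℝ) = p * d) →
      -(1 / ((d : ℝ) - 1)) ≤ ρ ∧ ρ ≤ 1) := by
  obtain ⟨hp0, hp1⟩ := hp
  have hpq : (0:ℝ) < p * (1 - p) := mul_pos hp0 (by linarith)
  have hd2 : (2:ℝ) ≤ (d:ℝ) := by exact_mod_cast hd
  have hd0 : (0:ℝ) < (d:ℝ) := by linarith
  have hd1 : (0:ℝ) < (d:ℝ) - 1 := by linarith
  set m : ℝ := ∑ x ∈ Finset.univ.filter
      (fun x : Fin d → Bool => x i = true ∧ x j = true), f x with hm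
  set S : (Fin d → Bool) → ℕ := fun x => (Finset.univ.filter fun a => x a = true).card with hSdef
  set J : ℕ := Nat.floor (p * d) with hJ
  -- upper bound m ≤ p
  have hub : m ≤ p := by
    rw [hm, ← hmarg i]
    apply Finset.sum_le_sum_of_subset_of_nonneg
    · exact Finset.monotone_filter_right _ (fun x _ hx => hx.1)
    · intro x _ _; exact hf0 x
  -- E[S] = d p
  have key1 : ∀ (a : Fin d), ∑ x : Fin d → Bool, (if x a = true then f x else 0) = p := by
    intro a; rw [← Finset.sum_filter]; exact hmarg a
  have hScast : ∀ x : Fin d → Bool,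
      ((S x : ℝ)) = ∑ a : Fin d, (if x a = true then (1:ℝ) else 0) := by
    intro x
    rw [hSdef]
    simp only []
    rw [Finset.card_filter, Nat.cast_sum]
    exact Finset.sum_congr rfl fun a _ => by by_cases h : x a = true <;> simp [h]
  have hEA : ∑ x : Fin d → Bool, (S x : ℝ) * f x = (d:ℝ) * p := by
    calc ∑ x : Fin d → Bool, (S x : ℝ) * f x
        = ∑ x : Fin d → Bool, ∑ a : Fin d, (if x a = true then (1:ℝ) else 0) * f x := by
          refine Finset.sum_congr rfl fun x _ => ?_
          rw [hScast x, Finset.sum_mul]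
      _ = ∑ a : Fin d, ∑ x : Fin d → Bool, (if x a = true then (1:ℝ) else 0) * f x :=
          Finset.sum_comm
      _ = ∑ a : Fin d, ∑ x : Fin d → Bool, (if x a = true then f x else 0) := by
          refine Finset.sum_congr rfl fun a _ => Finset.sum_congr rfl fun x _ => ?_
          by_cases h : x a = true <;> simp [h]
      _ = ∑ a : Fin d, p := by
          refine Finset.sum_congr rfl fun a _ => key1 a
      _ = (d:ℝ) * p := by simp [mul_comm]
  -- exchangeability: pair sums are all equal
  have hpair : ∀ a b : Fin d, a ≠ b →
      (∑ x : Fin d → Bool, (if x a = true ∧ x b = true then f x else 0)) = m := by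
    intro a b hab
    -- build permutation σ with σ i = a, σ j = b
    set σ₁ : Equiv.Perm (Fin d) := Equiv.swap i a with hσ1
    have hja : σ₁ j ≠ a := by
      intro h
      have : σ₁ j = σ₁ i := by rw [h, hσ1, Equiv.swap_apply_left]
      exact hij (σ₁.injective this).symm
    set σ₂ : Equiv.Perm (Fin d) := Equiv.swap (σ₁ j) b with hσ2
    set σ : Equiv.Perm (Fin d) := σ₁.trans σ₂ with hσ
    have hσi : σ i = a := by
      rw [hσ]; simp only [Equiv.trans_apply]
      rw [hσ1, Equiv.swap_apply_left, hσ2]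
      exact Equiv.swap_apply_of_ne_of_ne (Ne.symm hja) hab
    have hσj : σ j = b := by
      rw [hσ]; simp only [Equiv.trans_apply]
      rw [hσ2, Equiv.swap_apply_left]
    have hbij : Function.Bijective (fun x : Fin d → Bool => x ∘ σ) := by
      constructor
      · intro x y h
        funext k
        have := congrFun h (σ.symm k)
        simpa using this
      · intro y
        exact ⟨y ∘ σ.symm, by funext k; simp⟩
    have hsum := Fintype.sum_bijective (fun x : Fin d → Bool => x ∘ σ) hbij
      (fun x => if x a = true ∧ x b = true then f x else 0)
      (fun x => if x i = true ∧ x j = true then f x else 0)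
      (fun x => by
        simp only [Function.comp_apply, hσi, hσj, hexch σ x])
    rw [hm, Finset.sum_filter]
    exact hsum
  -- sum over offDiag identity
  have hS2 : ∀ x : Fin d → Bool,
      ∑ q ∈ (Finset.univ : Finset (Fin d)).offDiag,
        (if x q.1 = true ∧ x q.2 = true then (1:ℝ) else 0)
      = (S x : ℝ)^2 - (S x : ℝ) := by
    intro x
    rw [Finset.sum_boole]
    have hfe : (Finset.univ : Finset (Fin d)).offDiag.filter
        (fun q => x q.1 = true ∧ x q.2 = true)
        = ((Finset.univ.filter fun a => x a = true)).offDiag := by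
      ext q
      simp [Finset.mem_offDiag, Finset.mem_filter]
      tauto
    rw [hfe, Finset.offDiag_card]
    have hle : (Finset.univ.filter fun a => x a = true).card
        ≤ (Finset.univ.filter fun a => x a = true).card *
          (Finset.univ.filter fun a => x a = true).card := by
      rcases Nat.eq_zero_or_pos ((Finset.univ.filter fun a => x a = true).card) with h | h
      · simp [h]
      · exact Nat.le_mul_of_pos_left _ h
    rw [Nat.cast_sub hle]
    push_cast
    ring
  have hEAB : (d:ℝ) * ((d:ℝ) - 1) * m = ∑ x : Fin d → Bool, ((S x:ℝ)^2 - (S x:ℝ)) * f x := by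
    have : ∑ x : Fin d → Bool, ((S x:ℝ)^2 - (S x:ℝ)) * f x
        = ∑ x : Fin d → Bool, ∑ q ∈ (Finset.univ : Finset (Fin d)).offDiag,
            (if x q.1 = true ∧ x q.2 = true then (1:ℝ) else 0) * f x := by
      refine Finset.sum_congr rfl fun x _ => ?_
      rw [← hS2 x, Finset.sum_mul]
    rw [this, Finset.sum_comm]
    have : ∀ q ∈ (Finset.univ : Finset (Fin d)).offDiag,
        ∑ x : Fin d → Bool, (if x q.1 = true ∧ x q.2 = true then (1:ℝ) else 0) * f x = m := by
      intro q hq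
      have hq' := Finset.mem_offDiag.mp hq
      rw [← hpair q.1 q.2 hq'.2.2]
      refine Finset.sum_congr rfl fun x _ => ?_
      by_cases h : x q.1 = true ∧ x q.2 = true <;> simp [h]
    rw [Finset.sum_congr rfl this, Finset.sum_const, Finset.offDiag_card]
    simp only [Finset.card_univ, Fintype.card_fin]
    rw [nsmul_eq_mul, Nat.cast_sub (Nat.le_mul_of_pos_left d (by omega))]
    push_cast
    ring
  -- pointwise convexity bound and the key lower bound
  have hlb : 2 * (J:ℝ) * (p * d) - (J:ℝ) * ((J:ℝ) + 1) ≤ (d:ℝ) * ((d:ℝ) - 1) * m := by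
    have hpt : ∀ x : Fin d → Bool,
        (2 * (J:ℝ) * (S x : ℝ) - (J:ℝ) * ((J:ℝ)+1)) * f x ≤ ((S x:ℝ)^2 - (S x:ℝ)) * f x := by
      intro x
      have hfac : (0:ℝ) ≤ ((S x:ℝ) - J) * ((S x:ℝ) - J - 1) := by
        rcases le_or_gt (S x) J with h | h
        · have : (S x : ℝ) ≤ (J:ℝ) := by exact_mod_cast h
          nlinarith
        · have : (J:ℝ) + 1 ≤ (S x : ℝ) := by exact_mod_cast h
          nlinarith
      have : 2 * (J:ℝ) * (S x : ℝ) - (J:ℝ) * ((J:ℝ)+1) ≤ (S x:ℝ)^2 - (S x:ℝ) := by nlinarith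
      exact mul_le_mul_of_nonneg_right this (hf0 x)
    have hsum := Finset.sum_le_sum (fun x (_ : x ∈ (Finset.univ : Finset (Fin d → Bool))) => hpt x)
    rw [← hEAB] at hsum
    have hexp : ∑ x : Fin d → Bool, (2 * (J:ℝ) * (S x : ℝ) - (J:ℝ) * ((J:ℝ)+1)) * f x
        = 2 * (J:ℝ) * ((d:ℝ) * p) - (J:ℝ) * ((J:ℝ)+1) := by
      have : ∀ x : Fin d → Bool, (2 * (J:ℝ) * (S x : ℝ) - (J:ℝ) * ((J:ℝ)+1)) * f x
          = 2 * (J:ℝ) * ((S x : ℝ) * f x) - (J:ℝ) * ((J:ℝ)+1) * f x := fun x => by ring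
      rw [Finset.sum_congr rfl (fun x _ => this x), Finset.sum_sub_distrib,
        ← Finset.mul_sum, ← Finset.mul_sum, hEA, hf1]
      ring
    rw [hexp] at hsum
    linarith
  -- conclude
  have hρle1 : ρ ≤ 1 := by
    rw [hρ, div_le_one hpq]
    nlinarith
  constructor
  · intro _
    refine ⟨?_, hρle1⟩
    rw [hρ, div_le_div_iff_of_pos_right hpq]
    have hD : (0:ℝ) < (d:ℝ) * ((d:ℝ) - 1) := mul_pos hd0 hd1
    have : (1 / ((d : ℝ) * ((d : ℝ) - 1))) *
        (-(J : ℝ) * ((J : ℝ) + 1) + 2 * (J : ℝ) * (p * d)) ≤ m := by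
      rw [one_div_mul_eq_div, div_le_iff₀ hD]
      nlinarith
    linarith
  · rintro ⟨k, hk⟩
    refine ⟨?_, hρle1⟩
    have hJk : (J:ℝ) = p * d := by
      rw [hJ, ← hk, Nat.floor_natCast]
    have hlb' : p * d * (p * d - 1) ≤ (d:ℝ) * ((d:ℝ) - 1) * m := by
      nlinarith [hlb, hJk]
    rw [hρ, le_div_iff₀ hpq]
    have key : -(1 / ((d:ℝ) - 1)) * (p * (1 - p)) = -(p * (1 - p)) / ((d:ℝ) - 1) := by ring
    rw [key, div_le_iff₀ hd1]
    nlinarith [hlb', hd0]
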